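/- For a finite Markov chain with transition matrix T, the Cesàro limit T^∞ = lim_{n→∞} (1/n) ∑_{t=1}^n T^t exists (entrywise). -/

import Mathlib

open Filter



section CesaroAux

variable {S : Type*} [Fintype S] [DecidableEq S] (T : Matrix S S ℝ)

lemma pow_entry_nonneg (h : ∀ s s', 0 ≤ T s s') : ∀ t i j, 0 ≤ (T ^ t) i j := by
  intro t
  induction t with
  | zero =>
      intro i j
      rw [pow_zero]
      by_cases hij : i = j <;> simp [Matrix.one_apply, hij]
  | succ t ih =>
      intro i j
      rw [pow_succ, Matrix.mul_apply]
      exact Finset.sum_nonneg fun k _ => mul_nonneg (ih i k) (h k j)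

lemma pow_row_sum (hrow : ∀ s, ∑ s', T s s' = 1) : ∀ t i, ∑ j, (T ^ t) i j = 1 := by
  intro t
  induction t with
  | zero => intro i; simp [Matrix.one_apply]
  | succ t ih =>
      intro i
      rw [pow_succ]
      simp only [Matrix.mul_apply]
      rw [Finset.sum_comm]
      simp only [← Finset.mul_sum, hrow, mul_one]
      exact ih i

lemma pow_entry_le_one (h : ∀ s s', 0 ≤ T s s') (hrow : ∀ s, ∑ s', T s s' = 1) :
    ∀ t i j, (T ^ t) i j ≤ 1 := by
  intro t i j
  calc (T ^ t) i j ≤ ∑ j', (T ^ t) i j' :=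
        Finset.single_le_sum (fun k _ => pow_entry_nonneg T h t i k) (Finset.mem_univ j)
    _ = 1 := pow_row_sum T hrow t i

end CesaroAux


section CesaroAux

variable {S : Type*} [Fintype S] [DecidableEq S] (T : Matrix S S ℝ)

lemma sum_pow_shift (n : ℕ) :
    ∑ t ∈ Finset.Icc 1 n, T ^ (t + 1) = ∑ t ∈ Finset.Icc 1 n, T ^ t + T ^ (n + 1) - T := by
  induction n with
  | zero => simp
  | succ n ih =>
      rw [Finset.sum_Icc_succ_top (by omega : 1 ≤ n + 1),
          Finset.sum_Icc_succ_top (by omega : 1 ≤ n + 1), ih]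
      abel

lemma mul_cesaro (n : ℕ) :
    T * ((n : ℝ)⁻¹ • ∑ t ∈ Finset.Icc 1 n, T ^ t) =
      ((n : ℝ)⁻¹ • ∑ t ∈ Finset.Icc 1 n, T ^ t) + (n : ℝ)⁻¹ • (T ^ (n + 1) - T) := by
  rw [mul_smul_comm, Finset.mul_sum, ← smul_add]
  congr 1
  calc ∑ t ∈ Finset.Icc 1 n, T * T ^ t = ∑ t ∈ Finset.Icc 1 n, T ^ (t + 1) := by
        refine Finset.sum_congr rfl fun t _ => ?_
        rw [pow_succ']
    _ = _ := by rw [sum_pow_shift T n]; abel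

lemma cesaro_mul (n : ℕ) :
    ((n : ℝ)⁻¹ • ∑ t ∈ Finset.Icc 1 n, T ^ t) * T =
      ((n : ℝ)⁻¹ • ∑ t ∈ Finset.Icc 1 n, T ^ t) + (n : ℝ)⁻¹ • (T ^ (n + 1) - T) := by
  rw [smul_mul_assoc, Finset.sum_mul, ← smul_add]
  congr 1
  calc ∑ t ∈ Finset.Icc 1 n, T ^ t * T = ∑ t ∈ Finset.Icc 1 n, T ^ (t + 1) := by
        refine Finset.sum_congr rfl fun t _ => ?_
        rw [pow_succ]
    _ = _ := by rw [sum_pow_shift T n]; abel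

end CesaroAux


section CesaroAux3

variable {S : Type*} [Fintype S] [DecidableEq S] (T : Matrix S S ℝ)

lemma err_tendsto_zero (h : ∀ s s', 0 ≤ T s s') (hrow : ∀ s, ∑ s', T s s' = 1) :
    Tendsto (fun n : ℕ => (n : ℝ)⁻¹ • (T ^ (n + 1) - T)) atTop
      (nhds (0 : Matrix S S ℝ)) := by
  apply tendsto_pi_nhds.mpr
  intro i
  rw [tendsto_pi_nhds]
  intro j
  have hb : ∀ n : ℕ, ‖((n : ℝ)⁻¹ • (T ^ (n + 1) - T)) i j‖ ≤ (n : ℝ)⁻¹ * 2 := by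
    intro n
    have h1 : (0:ℝ) ≤ (T ^ (n+1)) i j := pow_entry_nonneg T h _ i j
    have h2 : (T ^ (n+1)) i j ≤ 1 := pow_entry_le_one T h hrow _ i j
    have h3 : (0:ℝ) ≤ T i j := h i j
    have h4 : T i j ≤ 1 := by
      have := pow_entry_le_one T h hrow 1 i j; simpa using this
    have : ((n : ℝ)⁻¹ • (T ^ (n + 1) - T)) i j = (n:ℝ)⁻¹ * ((T ^ (n+1)) i j - T i j) := rfl
    rw [this, norm_mul]
    have hn : ‖(n:ℝ)⁻¹‖ = (n:ℝ)⁻¹ := by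
      rw [Real.norm_eq_abs, abs_of_nonneg]; positivity
    rw [hn]
    gcongr
    rw [Real.norm_eq_abs, abs_le]
    constructor <;> linarith
  have hg : Tendsto (fun n : ℕ => (n : ℝ)⁻¹ * 2) atTop (nhds 0) := by
    have := tendsto_inv_atTop_nhds_zero_nat.mul_const (2:ℝ)
    simpa using this
  exact squeeze_zero_norm hb hg

lemma cesaro_mem (h : ∀ s s', 0 ≤ T s s') (hrow : ∀ s, ∑ s', T s s' = 1) (n : ℕ) :
    ∀ i j, ((n : ℝ)⁻¹ • ∑ t ∈ Finset.Icc 1 n, T ^ t) i j ∈ Set.Icc (0:ℝ) 1 := by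
  intro i j
  have he : ((n : ℝ)⁻¹ • ∑ t ∈ Finset.Icc 1 n, T ^ t) i j
      = (n:ℝ)⁻¹ * ∑ t ∈ Finset.Icc 1 n, (T ^ t) i j := by
    rw [Matrix.smul_apply, Matrix.sum_apply]
    rfl
  rw [he]
  have h0 : (0:ℝ) ≤ ∑ t ∈ Finset.Icc 1 n, (T ^ t) i j :=
    Finset.sum_nonneg fun t _ => pow_entry_nonneg T h t i j
  have h1 : ∑ t ∈ Finset.Icc 1 n, (T ^ t) i j ≤ (n : ℝ) := by
    calc ∑ t ∈ Finset.Icc 1 n, (T ^ t) i j ≤ ∑ t ∈ Finset.Icc 1 n, (1:ℝ) :=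
          Finset.sum_le_sum fun t _ => pow_entry_le_one T h hrow t i j
      _ = (n : ℝ) := by simp
  constructor
  · positivity
  · rcases Nat.eq_zero_or_pos n with hn | hn
    · simp [hn]
    · have hn' : (0:ℝ) < n := by exact_mod_cast hn
      rw [inv_mul_le_iff₀ hn', mul_one]
      exact h1

set_option linter.unusedSectionVars false in
lemma compactK : IsCompact {M : Matrix S S ℝ | ∀ i j, M i j ∈ Set.Icc (0:ℝ) 1} := by
  have : {M : Matrix S S ℝ | ∀ i j, M i j ∈ Set.Icc (0:ℝ) 1}
      = Set.univ.pi (fun _ : S => Set.univ.pi fun _ : S => Set.Icc (0:ℝ) 1) := by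
    ext M
    constructor
    · intro hM
      exact Set.mem_univ_pi.mpr fun i => Set.mem_univ_pi.mpr fun j => hM i j
    · intro hM i j
      exact Set.mem_univ_pi.mp (Set.mem_univ_pi.mp hM i) j
  rw [this]
  exact isCompact_univ_pi fun i => isCompact_univ_pi fun j => isCompact_Icc

end CesaroAux3
section CesaroAux4

variable {S : Type*} [Fintype S] [DecidableEq S] (T : Matrix S S ℝ)

lemma cluster_fix (h : ∀ s s', 0 ≤ T s s') (hrow : ∀ s, ∑ s', T s s' = 1)
    {P : Matrix S S ℝ} {φ : ℕ → ℕ} (hφ : Tendsto φ atTop atTop)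
    (hP : Tendsto (fun k => ((φ k : ℝ))⁻¹ • ∑ t ∈ Finset.Icc 1 (φ k), T ^ t)
      atTop (nhds P)) :
    T * P = P ∧ P * T = P := by
  have herr : Tendsto (fun k => ((φ k : ℝ))⁻¹ • (T ^ (φ k + 1) - T)) atTop
      (nhds (0 : Matrix S S ℝ)) := (err_tendsto_zero T h hrow).comp hφ
  have h2 : Tendsto (fun k => (((φ k : ℝ))⁻¹ • ∑ t ∈ Finset.Icc 1 (φ k), T ^ t)
      + ((φ k : ℝ))⁻¹ • (T ^ (φ k + 1) - T)) atTop (nhds (P + 0)) := hP.add herr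
  rw [add_zero] at h2
  constructor
  · have h1 : Tendsto (fun k => T * (((φ k : ℝ))⁻¹ • ∑ t ∈ Finset.Icc 1 (φ k), T ^ t))
        atTop (nhds (T * P)) :=
      ((Continuous.matrix_mul continuous_const continuous_id).tendsto P).comp hP
    have he : (fun k => T * (((φ k : ℝ))⁻¹ • ∑ t ∈ Finset.Icc 1 (φ k), T ^ t))
        = fun k => (((φ k : ℝ))⁻¹ • ∑ t ∈ Finset.Icc 1 (φ k), T ^ t)
          + ((φ k : ℝ))⁻¹ • (T ^ (φ k + 1) - T) := funext fun k => mul_cesaro T (φ k)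
    rw [he] at h1
    exact tendsto_nhds_unique h1 h2
  · have h1 : Tendsto (fun k => (((φ k : ℝ))⁻¹ • ∑ t ∈ Finset.Icc 1 (φ k), T ^ t) * T)
        atTop (nhds (P * T)) :=
      ((Continuous.matrix_mul continuous_id continuous_const).tendsto P).comp hP
    have he : (fun k => (((φ k : ℝ))⁻¹ • ∑ t ∈ Finset.Icc 1 (φ k), T ^ t) * T)
        = fun k => (((φ k : ℝ))⁻¹ • ∑ t ∈ Finset.Icc 1 (φ k), T ^ t)
          + ((φ k : ℝ))⁻¹ • (T ^ (φ k + 1) - T) := funext fun k => cesaro_mul T (φ k)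
    rw [he] at h1
    exact tendsto_nhds_unique h1 h2

lemma pow_fix_left {P : Matrix S S ℝ} (hTP : T * P = P) :
    ∀ t, 1 ≤ t → T ^ t * P = P := by
  intro t ht
  induction t with
  | zero => omega
  | succ t ih =>
      rcases Nat.eq_zero_or_pos t with h0 | h0
      · subst h0; simpa using hTP
      · rw [pow_succ', mul_assoc, ih h0, hTP]

lemma pow_fix_right {P : Matrix S S ℝ} (hPT : P * T = P) :
    ∀ t, 1 ≤ t → P * T ^ t = P := by
  intro t ht
  induction t with
  | zero => omega
  | succ t ih =>
      rcases Nat.eq_zero_or_pos t with h0 | h0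
      · subst h0; simpa using hPT
      · rw [pow_succ, ← mul_assoc, ih h0, hPT]

lemma fixed_cesaro_left {P : Matrix S S ℝ} (hTP : T * P = P) {n : ℕ} (hn : 1 ≤ n) :
    ((n : ℝ)⁻¹ • ∑ t ∈ Finset.Icc 1 n, T ^ t) * P = P := by
  rw [smul_mul_assoc, Finset.sum_mul,
    Finset.sum_congr rfl (fun t ht => pow_fix_left T hTP t (Finset.mem_Icc.mp ht).1),
    Finset.sum_const, Nat.card_Icc]
  have hcard : n + 1 - 1 = n := by omega
  rw [hcard, ← Nat.cast_smul_eq_nsmul ℝ, smul_smul, inv_mul_cancel₀, one_smul]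
  exact Nat.cast_ne_zero.mpr (by omega)
  
lemma fixed_cesaro_right {P : Matrix S S ℝ} (hPT : P * T = P) {n : ℕ} (hn : 1 ≤ n) :
    P * ((n : ℝ)⁻¹ • ∑ t ∈ Finset.Icc 1 n, T ^ t) = P := by
  rw [mul_smul_comm, Finset.mul_sum,
    Finset.sum_congr rfl (fun t ht => pow_fix_right T hPT t (Finset.mem_Icc.mp ht).1),
    Finset.sum_const, Nat.card_Icc]
  have hcard : n + 1 - 1 = n := by omega
  rw [hcard, ← Nat.cast_smul_eq_nsmul ℝ, smul_smul, inv_mul_cancel₀, one_smul]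
  exact Nat.cast_ne_zero.mpr (by omega)

lemma cluster_unique (h : ∀ s s', 0 ≤ T s s') (hrow : ∀ s, ∑ s', T s s' = 1)
    {P Q : Matrix S S ℝ} {φ ψ : ℕ → ℕ}
    (hφ : Tendsto φ atTop atTop) (hψ : Tendsto ψ atTop atTop)
    (hP : Tendsto (fun k => ((φ k : ℝ))⁻¹ • ∑ t ∈ Finset.Icc 1 (φ k), T ^ t)
      atTop (nhds P))
    (hQ : Tendsto (fun k => ((ψ k : ℝ))⁻¹ • ∑ t ∈ Finset.Icc 1 (ψ k), T ^ t)
      atTop (nhds Q)) : P = Q := by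
  obtain ⟨hTP, hPT⟩ := cluster_fix T h hrow hφ hP
  obtain ⟨hTQ, hQT⟩ := cluster_fix T h hrow hψ hQ
  have hQP_P : Q * P = P := by
    have h1 : Tendsto (fun k => (((ψ k : ℝ))⁻¹ • ∑ t ∈ Finset.Icc 1 (ψ k), T ^ t) * P)
        atTop (nhds (Q * P)) :=
      ((Continuous.matrix_mul continuous_id continuous_const).tendsto Q).comp hQ
    have h2 : (fun k => (((ψ k : ℝ))⁻¹ • ∑ t ∈ Finset.Icc 1 (ψ k), T ^ t) * P)
        =ᶠ[atTop] fun _ => P :=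
      (hψ.eventually_ge_atTop 1).mono fun k hk => fixed_cesaro_left T hTP hk
    exact tendsto_nhds_unique (h1.congr' h2) tendsto_const_nhds
  have hQP_Q : Q * P = Q := by
    have h1 : Tendsto (fun k => Q * (((φ k : ℝ))⁻¹ • ∑ t ∈ Finset.Icc 1 (φ k), T ^ t))
        atTop (nhds (Q * P)) :=
      ((Continuous.matrix_mul continuous_const continuous_id).tendsto P).comp hP
    have h2 : (fun k => Q * (((φ k : ℝ))⁻¹ • ∑ t ∈ Finset.Icc 1 (φ k), T ^ t))
        =ᶠ[atTop] fun _ => Q :=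
      (hφ.eventually_ge_atTop 1).mono fun k hk => fixed_cesaro_right T hQT hk
    exact tendsto_nhds_unique (h1.congr' h2) tendsto_const_nhds
  rw [← hQP_P, hQP_Q]

end CesaroAux4
/-- For a finite Markov chain with row-stochastic transition matrix `T`,
the Cesàro limit `T^∞ = lim_{n→∞} (1/n) ∑_{t=1}^n T^t` exists (entrywise). -/
theorem cesaro_limit_exists {S : Type*} [Fintype S] [DecidableEq S]
    (T : Matrix S S ℝ)
    (hnonneg : ∀ s s', 0 ≤ T s s') (hrow : ∀ s, ∑ s', T s s' = 1) :
    ∃ Tinf : Matrix S S ℝ,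
      Tendsto (fun n : ℕ => (n : ℝ)⁻¹ • ∑ t ∈ Finset.Icc 1 n, T ^ t)
        atTop (nhds Tinf) := by
  letI : FirstCountableTopology (Matrix S S ℝ) :=
    inferInstanceAs (FirstCountableTopology (S → S → ℝ))
  have hK : IsCompact {M : Matrix S S ℝ | ∀ i j, M i j ∈ Set.Icc (0:ℝ) 1} := compactK
  have hmem : ∀ n : ℕ, ((n : ℝ)⁻¹ • ∑ t ∈ Finset.Icc 1 n, T ^ t)
      ∈ {M : Matrix S S ℝ | ∀ i j, M i j ∈ Set.Icc (0:ℝ) 1} :=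
    fun n => cesaro_mem T hnonneg hrow n
  obtain ⟨L, -, φ, hφmono, hφlim⟩ := hK.tendsto_subseq hmem
  refine ⟨L, ?_⟩
  apply tendsto_of_subseq_tendsto
  intro ns hns
  obtain ⟨P, -, ms, hmsmono, hmslim⟩ := hK.tendsto_subseq (x := fun n =>
    ((ns n : ℝ)⁻¹ • ∑ t ∈ Finset.Icc 1 (ns n), T ^ t)) (fun n => hmem (ns n))
  refine ⟨ms, ?_⟩
  have hPL : P = L :=
    cluster_unique T hnonneg hrow (hns.comp hmsmono.tendsto_atTop)
      hφmono.tendsto_atTop hmslim hφlim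
  rw [← hPL]
  exact hmslim
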